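/- Let Q = k[[x,y,z]] and suppose R = Q/(I1 ∩ I2) is compressed of type 2 with socle polynomial χ^{s1}+χ^{s}, arising from homogeneous compressed Gorenstein ideals I1, I2, with ⌈(s+1)/2⌉ = t (the initial degree of I1 ∩ I2) and a = s1 − t + 1. Then the first graded Betti number in degree t satisfies β_{1t}(R) = (t+1) − binom(a+1,2) if s is odd, and β_{1t}(R) = (2t+1) − binom(a+1,2) if s is even. -/

import Mathlib

open MvPolynomial

/-- The ideal generated by the variables (the graded maximal ideal `q`). -/
noncomputable def qIdeal (k : Type*) [Field k] (e : ℕ) : Ideal (MvPolynomial (Fin e) k) :=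
  Ideal.span (Set.range X)

/-- The Hilbert function of `Q/J`: `h(i) = dim_k (q^i + J)/(q^{i+1} + J)`. -/
noncomputable def hilb (k : Type*) [Field k] (e : ℕ)
    (J : Ideal (MvPolynomial (Fin e) k)) (i : ℕ) : ℕ :=
  Module.finrank k
    (((qIdeal k e ^ i ⊔ J).map (Ideal.Quotient.mk (qIdeal k e ^ (i + 1) ⊔ J))).restrictScalars k)

/-- An ideal is homogeneous if it is generated by homogeneous polynomials. -/
def IsHomogeneousIdeal (k : Type*) [Field k] (e : ℕ)
    (J : Ideal (MvPolynomial (Fin e) k)) : Prop :=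
  ∃ S : Set (MvPolynomial (Fin e) k),
    (∀ p ∈ S, ∃ n, MvPolynomial.IsHomogeneous p n) ∧ J = Ideal.span S

/-- Hilbert function of the ambient ring: `h_Q(i) = binom(e−1+i, e−1)`. -/
def hQ (e i : ℕ) : ℕ := Nat.choose (e - 1 + i) (e - 1)

/-- `h_Q(σ − i)`, interpreted as `0` for `i > σ`. -/
def hQat (e σ i : ℕ) : ℕ := if i ≤ σ then hQ e (σ - i) else 0

/-- `Q/J` has type 1 (is artinian Gorenstein): the socle `(J : q)/J` is spanned
by one nonzero element. -/
def HasTypeOne (k : Type*) [Field k] (e : ℕ) (J : Ideal (MvPolynomial (Fin e) k)) : Prop :=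
  ∃ x, x ∉ J ∧ J.colon (qIdeal k e) = J ⊔ Ideal.span {x}

/-- `Q/J` has type 2: the socle `(J : q)/J` is spanned by two elements whose
cosets are linearly independent over `k`. -/
def HasTypeTwo (k : Type*) [Field k] (e : ℕ) (J : Ideal (MvPolynomial (Fin e) k)) : Prop :=
  ∃ x y, J.colon (qIdeal k e) = J ⊔ Ideal.span {x, y} ∧
    ∀ a b : MvPolynomial (Fin e) k, a * x + b * y ∈ J →
      a ∈ qIdeal k e ∧ b ∈ qIdeal k e

/-- `σ` is the socle degree of `Q/J`. -/
def SocDeg (k : Type*) [Field k] (e : ℕ) (J : Ideal (MvPolynomial (Fin e) k)) (σ : ℕ) : Prop :=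
  ¬ qIdeal k e ^ σ ≤ J ∧ qIdeal k e ^ (σ + 1) ≤ J

/-- `τ` is the initial degree of `J`. -/
def IniDeg (k : Type*) [Field k] (e : ℕ) (J : Ideal (MvPolynomial (Fin e) k)) (τ : ℕ) : Prop :=
  J ≤ qIdeal k e ^ τ ∧ ¬ J ≤ qIdeal k e ^ (τ + 1)

/-- `Q/J` is a compressed Gorenstein ring of socle degree `σ`. -/
def CompressedGor (k : Type*) [Field k] (e : ℕ) (J : Ideal (MvPolynomial (Fin e) k)) (σ : ℕ) : Prop :=
  ∀ i, hilb k e J i = min (hQ e i) (hQat e σ i)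


section helpers

variable {k : Type*} [Field k]

lemma X_mem_q (i : Fin 3) : (X i : MvPolynomial (Fin 3) k) ∈ qIdeal k 3 :=
  Ideal.subset_span ⟨i, rfl⟩

lemma prod_X_pow_mem (d : Fin 3 →₀ ℕ) (s : Finset (Fin 3)) :
    (∏ i ∈ s, X i ^ d i : MvPolynomial (Fin 3) k) ∈ qIdeal k 3 ^ (∑ i ∈ s, d i) := by
  classical
  induction s using Finset.induction with
  | empty => simp [Ideal.one_eq_top]
  | insert _ _ h ih =>
    rw [Finset.prod_insert h, Finset.sum_insert h, pow_add]
    exact Ideal.mul_mem_mul (Ideal.pow_mem_pow (X_mem_q _) _) ih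

lemma monomial_mem_q_pow (d : Fin 3 →₀ ℕ) (c : k) :
    monomial d c ∈ qIdeal k 3 ^ d.degree := by
  rw [monomial_eq]
  exact Ideal.mul_mem_left _ _ (prod_X_pow_mem d d.support)

lemma mem_q_pow_of_homog {p : MvPolynomial (Fin 3) k} {n : ℕ}
    (hp : p ∈ homogeneousSubmodule (Fin 3) k n) : p ∈ qIdeal k 3 ^ n := by
  have hs : ∀ d ∈ p.support, Finsupp.degree d = n := by
    rw [homogeneousSubmodule_eq_finsupp_supported] at hp
    exact fun d hd => AddMonoidAlgebra.mem_supported.mp hp hd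
  have hmem : (∑ v ∈ p.support, monomial v (coeff v p)) ∈ qIdeal k 3 ^ n := by
    refine Ideal.sum_mem _ fun d hd => ?_
    have h2 := monomial_mem_q_pow d (coeff d p)
    rwa [hs d hd] at h2
  rwa [← as_sum p] at hmem

lemma degree_add' (a b : Fin 3 →₀ ℕ) : (a + b).degree = a.degree + b.degree := by
  have h : ∀ f : Fin 3 →₀ ℕ, f.degree = Multiset.card (Finsupp.toMultiset f) := by
    intro f; rw [Finsupp.card_toMultiset]; rfl
  rw [h, h, h, map_add, Multiset.card_add]

lemma degree_single (i : Fin 3) : (Finsupp.single i 1).degree = 1 := by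
  have h : (Finsupp.single i 1).degree
      = Multiset.card (Finsupp.toMultiset (Finsupp.single i 1)) := by
    rw [Finsupp.card_toMultiset]; rfl
  rw [h, Finsupp.toMultiset_single]; simp

lemma degree_mono {a b : Fin 3 →₀ ℕ} (h : a ≤ b) : a.degree ≤ b.degree := by
  obtain ⟨c, rfl⟩ := le_iff_exists_add.mp h
  rw [degree_add']; omega

lemma q_pow_le_span (n : ℕ) :
    qIdeal k 3 ^ n ≤ Ideal.span ((fun d => monomial d (1 : k)) '' {d | n ≤ Finsupp.degree d}) := by
  induction n with
  | zero =>
    intro x _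
    rw [mem_ideal_span_monomial_image]
    exact fun xi _ => ⟨0, by simp, zero_le⟩
  | succ n ih =>
    rw [pow_succ]
    refine le_trans (Ideal.mul_mono ih le_rfl) ?_
    show _ * qIdeal k 3 ≤ _
    rw [qIdeal, Ideal.span_mul_span']
    rw [Ideal.span_le]
    rintro z ⟨a, ha, b, hb, rfl⟩
    obtain ⟨d, hd, rfl⟩ := ha
    obtain ⟨i, rfl⟩ := hb
    have hX : (X i : MvPolynomial (Fin 3) k) = monomial (Finsupp.single i 1) 1 := rfl
    dsimp only
    rw [hX, monomial_mul, one_mul]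
    refine Ideal.subset_span ⟨d + Finsupp.single i 1, ?_, rfl⟩
    simp only [Set.mem_setOf_eq] at hd ⊢
    rw [degree_add', degree_single]; omega

lemma comp_eq_zero_of_mem_pow {p : MvPolynomial (Fin 3) k} {n m : ℕ}
    (hp : p ∈ qIdeal k 3 ^ n) (h : m < n) : homogeneousComponent m p = 0 := by
  have h1 := q_pow_le_span n hp
  rw [mem_ideal_span_monomial_image] at h1
  refine homogeneousComponent_eq_zero' _ _ fun d hd => ?_
  obtain ⟨si, hsi, hle⟩ := h1 d hd
  simp only [Set.mem_setOf_eq] at hsi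
  have := degree_mono hle
  omega

lemma sum_comp_eq (p : MvPolynomial (Fin 3) k) {N : ℕ} (h : p.totalDegree < N) :
    ∑ i ∈ Finset.range N, homogeneousComponent i p = p := by
  have h2 : ∑ i ∈ Finset.range N, homogeneousComponent i p
      = ∑ i ∈ Finset.range (p.totalDegree + 1), homogeneousComponent i p := by
    symm
    apply Finset.sum_subset
    · intro x hx
      simp only [Finset.mem_range] at hx ⊢; omega
    · intro x _ hx
      simp only [Finset.mem_range, not_lt] at hx
      exact homogeneousComponent_eq_zero x p (by omega)
  rw [h2, sum_homogeneousComponent]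

attribute [local instance] MvPolynomial.gradedAlgebra

lemma comp_mem_of_span {S : Set (MvPolynomial (Fin 3) k)}
    (hS : ∀ p ∈ S, ∃ n, MvPolynomial.IsHomogeneous p n)
    (n : ℕ) (p : MvPolynomial (Fin 3) k) (hp : p ∈ Ideal.span S) :
    homogeneousComponent n p ∈ Ideal.span S := by
  have hhom : (Ideal.span S).IsHomogeneous (homogeneousSubmodule (Fin 3) k) :=
    Ideal.homogeneous_span _ S (fun x hx => by
      obtain ⟨m, hm⟩ := hS x hx; exact ⟨m, hm⟩)
  have h2 := hhom n hp
  have h3 : ((DirectSum.decompose (homogeneousSubmodule (Fin 3) k) p n :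
      homogeneousSubmodule (Fin 3) k n) : MvPolynomial (Fin 3) k)
      = homogeneousComponent n p :=
    MvPolynomial.decomposition.decompose'_apply p n
  rwa [h3] at h2

lemma degree_eq_card (f : Fin 3 →₀ ℕ) : f.degree = Multiset.card (Finsupp.toMultiset f) := by
  rw [Finsupp.card_toMultiset]; rfl

noncomputable def symEquiv (n : ℕ) :
    {d : Fin 3 →₀ ℕ | Finsupp.degree d = n} ≃ Sym (Fin 3) n :=
  Equiv.subtypeEquiv (Multiset.toFinsupp (α := Fin 3)).toEquiv.symm (by
    intro d
    simp only [Set.mem_setOf_eq, AddEquiv.toEquiv_symm, Equiv.symm_symm]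
    rw [degree_eq_card]
    simp)

noncomputable instance degSetFintype (n : ℕ) :
    Fintype {d : Fin 3 →₀ ℕ | Finsupp.degree d = n} :=
  Fintype.ofEquiv _ (symEquiv n).symm

lemma card_degSet (n : ℕ) :
    Fintype.card {d : Fin 3 →₀ ℕ | Finsupp.degree d = n} = (n + 2).choose 2 := by
  rw [Fintype.card_congr (symEquiv n), Sym.card_sym_eq_choose]
  have h : Fintype.card (Fin 3) + n - 1 = n + 2 := by simp; omega
  rw [h, ← Nat.choose_symm (by omega : n ≤ n + 2)]
  congr 1; omega

noncomputable def homogEquiv (n : ℕ) :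
    (homogeneousSubmodule (Fin 3) k n) ≃ₗ[k] ({d : Fin 3 →₀ ℕ | Finsupp.degree d = n} → k) :=
  (LinearEquiv.ofEq _ _ (homogeneousSubmodule_eq_finsupp_supported (σ := Fin 3) k n)) ≪≫ₗ
    (AddMonoidAlgebra.supportedEquivFinsupp _) ≪≫ₗ
    (Finsupp.linearEquivFunOnFinite k k _)

instance homogFD (n : ℕ) : FiniteDimensional k (homogeneousSubmodule (Fin 3) k n) :=
  Module.Finite.equiv (homogEquiv (k := k) n).symm

lemma finrank_homog (n : ℕ) :
    Module.finrank k (homogeneousSubmodule (Fin 3) k n) = (n + 2).choose 2 := by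
  rw [(homogEquiv (k := k) n).finrank_eq, Module.finrank_fintype_fun_eq_card, card_degSet]

lemma sub_comp_mem {p : MvPolynomial (Fin 3) k} {n : ℕ} (hp : p ∈ qIdeal k 3 ^ n) :
    p - homogeneousComponent n p ∈ qIdeal k 3 ^ (n + 1) := by
  set N := max (p.totalDegree + 1) (n + 1) with hN
  have hsum := sum_comp_eq p (N := N) (by omega)
  have heq : p - homogeneousComponent n p
      = ∑ i ∈ (Finset.range N).erase n, homogeneousComponent i p := by
    rw [Finset.sum_erase_eq_sub (by simp only [Finset.mem_range, hN]; omega), hsum]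
  rw [heq]
  refine Submodule.sum_mem _ fun i hi => ?_
  simp only [Finset.mem_erase, Finset.mem_range] at hi
  rcases lt_or_gt_of_ne hi.1 with h | h
  · rw [comp_eq_zero_of_mem_pow hp (by omega)]; exact zero_mem _
  · exact Ideal.pow_le_pow_right (by omega) (mem_q_pow_of_homog (homogeneousComponent_mem i p))

set_option maxHeartbeats 1000000 in
set_option synthInstance.maxHeartbeats 400000 in
lemma hilb_add (J : Ideal (MvPolynomial (Fin 3) k))
    (hJ : ∀ (n : ℕ) (p : MvPolynomial (Fin 3) k), p ∈ J → homogeneousComponent n p ∈ J)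
    (i : ℕ) :
    hilb k 3 J i
      + Module.finrank k ↥(Submodule.restrictScalars k J ⊓ homogeneousSubmodule (Fin 3) k i)
      = (i + 2).choose 2 := by
  classical
  set I : Ideal (MvPolynomial (Fin 3) k) := qIdeal k 3 ^ (i + 1) ⊔ J with hI
  set f : MvPolynomial (Fin 3) k →ₗ[k] (MvPolynomial (Fin 3) k ⧸ I) :=
    (Ideal.Quotient.mkₐ k I).toLinearMap with hf
  have hfapp : ∀ x, f x = Ideal.Quotient.mk I x := fun x => rfl
  have hker : LinearMap.ker f = Submodule.restrictScalars k I := by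
    ext x
    simp only [LinearMap.mem_ker, Submodule.restrictScalars_mem, hfapp,
      Ideal.Quotient.eq_zero_iff_mem]
  have hT : (((qIdeal k 3 ^ i ⊔ J).map (Ideal.Quotient.mk I)).restrictScalars k)
      = Submodule.map f (homogeneousSubmodule (Fin 3) k i) := by
    ext x
    simp only [Submodule.restrictScalars_mem, Submodule.mem_map]
    constructor
    · intro hx
      obtain ⟨y, hy, rfl⟩ :=
        (Ideal.mem_map_iff_of_surjective _ Ideal.Quotient.mk_surjective).mp hx
      obtain ⟨a, ha, b, hb, rfl⟩ := Submodule.mem_sup.mp hy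
      refine ⟨homogeneousComponent i a, homogeneousComponent_mem i a, ?_⟩
      rw [hfapp, Ideal.Quotient.mk_eq_mk_iff_sub_mem]
      have h1 : homogeneousComponent i a - (a + b)
          = -((a - homogeneousComponent i a) + b) := by ring
      rw [h1]
      refine neg_mem (add_mem ?_ ?_)
      · exact Submodule.mem_sup_left (sub_comp_mem ha)
      · exact Submodule.mem_sup_right hb
    · rintro ⟨p, hp, rfl⟩
      rw [hfapp]
      exact Ideal.mem_map_of_mem _ (Submodule.mem_sup_left (mem_q_pow_of_homog hp))
  have hK : homogeneousSubmodule (Fin 3) k i ⊓ Submodule.restrictScalars k I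
      = Submodule.restrictScalars k J ⊓ homogeneousSubmodule (Fin 3) k i := by
    ext x
    simp only [Submodule.mem_inf, Submodule.restrictScalars_mem]
    constructor
    · rintro ⟨hx, hxI⟩
      obtain ⟨a, ha, b, hb, hab⟩ := Submodule.mem_sup.mp hxI
      refine ⟨?_, hx⟩
      have h1 : homogeneousComponent i x = x := by
        rw [homogeneousComponent_of_mem hx]; simp
      have h2 : homogeneousComponent i a = 0 := comp_eq_zero_of_mem_pow ha (by omega)
      have h4 : homogeneousComponent i (a + b) = x := by rw [hab, h1]
      rw [map_add, h2, zero_add] at h4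
      rw [← h4]
      exact hJ i b hb
    · rintro ⟨hxJ, hx⟩
      exact ⟨hx, Submodule.mem_sup_right hxJ⟩
  set g := f.comp (homogeneousSubmodule (Fin 3) k i).subtype with hg
  have h1 := LinearMap.finrank_range_add_finrank_ker g
  have hrange : LinearMap.range g = Submodule.map f (homogeneousSubmodule (Fin 3) k i) := by
    rw [hg, LinearMap.range_comp, Submodule.range_subtype]
  have hkerg : LinearMap.ker g
      = Submodule.comap (homogeneousSubmodule (Fin 3) k i).subtype
          (homogeneousSubmodule (Fin 3) k i ⊓ Submodule.restrictScalars k I) := by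
    rw [hg, LinearMap.ker_comp]
    ext x
    simp only [Submodule.mem_comap, Submodule.mem_inf, LinearMap.mem_ker, hker,
      Submodule.restrictScalars_mem, Submodule.coe_subtype]
    exact ⟨fun h => ⟨x.2, h⟩, fun h => h.2⟩
  have h2 : Module.finrank k (LinearMap.ker g)
      = Module.finrank k ↥(Submodule.restrictScalars k J ⊓ homogeneousSubmodule (Fin 3) k i) := by
    rw [hkerg, ← hK]
    exact (Submodule.comapSubtypeEquivOfLe inf_le_left).finrank_eq
  have h3 : hilb k 3 J i = Module.finrank k (LinearMap.range g) := by
    rw [hrange, hilb, ← hT]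
  rw [h3, ← h2, ← finrank_homog (k := k) i]
  exact h1

lemma one_not_mem_q : (1 : MvPolynomial (Fin 3) k) ∉ qIdeal k 3 := by
  intro h
  have hle : qIdeal k 3 ≤ RingHom.ker (constantCoeff (σ := Fin 3) (R := k)) := by
    rw [qIdeal, Ideal.span_le]
    rintro z ⟨i, rfl⟩
    simp [RingHom.mem_ker]
  have h2 := hle h
  simp [RingHom.mem_ker] at h2

end helpers

/-- Let `Q = k[[x,y,z]]` (graded setting) and suppose
`R = Q/(I1 ∩ I2)` is compressed of type 2 with socle polynomial `χ^{s1}+χ^{s}`,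
arising from homogeneous compressed Gorenstein ideals `I1, I2`, with
`⌈(s+1)/2⌉ = t` the initial degree of `I1 ∩ I2` and `a = s1 − t + 1`. Then
`β_{1t}(R)`, i.e. the number of minimal generators of `I1 ∩ I2` of degree `t`,
which equals `dim_k (I1 ∩ I2)_t` since `t` is the initial degree, satisfies
`β_{1t}(R) = (t+1) − binom(a+1,2)` if `s` is odd and
`β_{1t}(R) = (2t+1) − binom(a+1,2)` if `s` is even. -/
theorem stmt16 (k : Type*) [Field k]
    (I1 I2 : Ideal (MvPolynomial (Fin 3) k))
    (h1hom : IsHomogeneousIdeal k 3 I1) (h2hom : IsHomogeneousIdeal k 3 I2)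
    (h1p : I1.IsPrimary) (h1r : I1.radical = qIdeal k 3)
    (h2p : I2.IsPrimary) (h2r : I2.radical = qIdeal k 3)
    (h1q2 : I1 ≤ qIdeal k 3 ^ 2) (h2q2 : I2 ≤ qIdeal k 3 ^ 2)
    (h1gor : HasTypeOne k 3 I1) (h2gor : HasTypeOne k 3 I2)
    (s1 s t a : ℕ)
    (hs1 : SocDeg k 3 I1 s1) (hs2 : SocDeg k 3 I2 s) (hle : s1 ≤ s)
    (h1c : CompressedGor k 3 I1 s1) (h2c : CompressedGor k 3 I2 s)
    (htype2 : HasTypeTwo k 3 (I1 ⊓ I2))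
    (hsR : SocDeg k 3 (I1 ⊓ I2) s)
    (htini : IniDeg k 3 (I1 ⊓ I2) t)
    (ht : (s + 2) / 2 = t)
    -- `R` is compressed with socle polynomial `χ^{s1} + χ^{s}`
    (hcomp : ∀ i, hilb k 3 (I1 ⊓ I2) i = min (hQ 3 i) (hQat 3 s1 i + hQat 3 s i))
    (ha : a = s1 - t + 1) :
    (Odd s → Module.finrank k
        ↥((Submodule.restrictScalars k (I1 ⊓ I2)) ⊓
          (MvPolynomial.homogeneousSubmodule (Fin 3) k t)) =
      (t + 1) - Nat.choose (a + 1) 2) ∧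
    (Even s → Module.finrank k
        ↥((Submodule.restrictScalars k (I1 ⊓ I2)) ⊓
          (MvPolynomial.homogeneousSubmodule (Fin 3) k t)) =
      (2 * t + 1) - Nat.choose (a + 1) 2) := by
  classical
  obtain ⟨S2, hS2, hI2span⟩ := h2hom
  have hI2comp : ∀ (n : ℕ) (p : MvPolynomial (Fin 3) k),
      p ∈ I2 → homogeneousComponent n p ∈ I2 := by
    intro n p hp
    rw [hI2span] at hp ⊢
    exact comp_mem_of_span hS2 n p hp
  by_cases hts1 : t ≤ s1
  · -- main case
    obtain ⟨S1, hS1, hI1span⟩ := h1hom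
    have hJcomp : ∀ (n : ℕ) (p : MvPolynomial (Fin 3) k),
        p ∈ I1 ⊓ I2 → homogeneousComponent n p ∈ I1 ⊓ I2 := by
      intro n p hp
      rw [Submodule.mem_inf] at hp ⊢
      constructor
      · rw [hI1span] at hp ⊢
        exact comp_mem_of_span hS1 n p hp.1
      · exact hI2comp n p hp.2
    have hmain := hilb_add (I1 ⊓ I2) hJcomp t
    have hc := hcomp t
    have hts : t ≤ s := le_trans hts1 hle
    have e1 : hQ 3 t = (t + 2).choose 2 := by
      unfold hQ; congr 1; omega
    have e2 : hQat 3 s1 t = (a + 1).choose 2 := by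
      unfold hQat
      rw [if_pos hts1]
      unfold hQ; congr 1; omega
    constructor
    · intro hodd
      obtain ⟨m, hm⟩ := hodd
      have htm : t = m + 1 := by omega
      have e3 : hQat 3 s t = (t + 1).choose 2 := by
        unfold hQat
        rw [if_pos hts]
        unfold hQ; congr 1; omega
      have pas : (t + 2).choose 2 = (t + 1).choose 2 + (t + 1) := by
        have p1 := Nat.choose_succ_succ (t + 1) 1
        norm_num at p1
        rw [show t + 1 + 1 = t + 2 by omega] at p1
        omega
      rw [e1, e2, e3] at hc
      rcases le_total ((t + 2).choose 2) ((a + 1).choose 2 + (t + 1).choose 2) with h | h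
      · rw [min_eq_left h] at hc
        omega
      · rw [min_eq_right h] at hc
        omega
    · intro heven
      obtain ⟨m, hm⟩ := heven
      have htm : t = m + 1 := by omega
      have hm1 : 1 ≤ m := by omega
      have e3 : hQat 3 s t = t.choose 2 := by
        unfold hQat
        rw [if_pos hts]
        unfold hQ; congr 1; omega
      have pas : (t + 2).choose 2 = t.choose 2 + (2 * t + 1) := by
        have p1 := Nat.choose_succ_succ (t + 1) 1
        have p2 := Nat.choose_succ_succ t 1
        norm_num at p1 p2
        rw [show t + 1 + 1 = t + 2 by omega] at p1
        omega
      rw [e1, e2, e3] at hc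
      rcases le_total ((t + 2).choose 2) ((a + 1).choose 2 + t.choose 2) with h | h
      · rw [min_eq_left h] at hc
        omega
      · rw [min_eq_right h] at hc
        omega
  · -- contradiction case : s1 < t
    exfalso
    have h2s : 2 * s1 ≤ s := by omega
    have hlow : ∀ d, d ≤ s1 →
        (Submodule.restrictScalars k I2 ⊓ homogeneousSubmodule (Fin 3) k d) = ⊥ := by
      intro d hd
      have hm := hilb_add I2 hI2comp d
      have hc2 := h2c d
      have hds : d ≤ s := by omega
      have hmin : min (hQ 3 d) (hQat 3 s d) = hQ 3 d := by
        apply min_eq_left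
        unfold hQat
        rw [if_pos hds]
        unfold hQ
        exact Nat.choose_le_choose 2 (by omega)
      rw [hmin] at hc2
      have e1 : hQ 3 d = (d + 2).choose 2 := by unfold hQ; congr 1; omega
      have hzero : Module.finrank k
          ↥(Submodule.restrictScalars k I2 ⊓ homogeneousSubmodule (Fin 3) k d) = 0 := by
        omega
      haveI : FiniteDimensional k
          ↥(Submodule.restrictScalars k I2 ⊓ homogeneousSubmodule (Fin 3) k d) :=
        Submodule.finiteDimensional_of_le inf_le_right
      exact Submodule.finrank_eq_zero.mp hzero
    have hI2I1 : I2 ≤ I1 := by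
      intro p hp
      have hsum : ∑ i ∈ Finset.range (p.totalDegree + 1), homogeneousComponent i p ∈ I1 := by
        refine Ideal.sum_mem _ fun i _ => ?_
        by_cases hi : i ≤ s1
        · have hmem : homogeneousComponent i p
              ∈ Submodule.restrictScalars k I2 ⊓ homogeneousSubmodule (Fin 3) k i :=
            ⟨hI2comp i p hp, homogeneousComponent_mem i p⟩
          rw [hlow i hi] at hmem
          rw [Submodule.mem_bot] at hmem
          rw [hmem]
          exact zero_mem _
        · have hcomp_i : homogeneousComponent i p ∈ qIdeal k 3 ^ i :=
            mem_q_pow_of_homog (homogeneousComponent_mem i p)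
          exact hs1.2 (Ideal.pow_le_pow_right (by omega) hcomp_i)
      rwa [sum_comp_eq p (by omega)] at hsum
    have hJeq : I1 ⊓ I2 = I2 := inf_eq_right.mpr hI2I1
    obtain ⟨x, y, hxy, hind⟩ := htype2
    obtain ⟨x2, hx2n, hcol⟩ := h2gor
    rw [hJeq] at hxy hind
    rw [hcol] at hxy
    have hx2colon : x2 ∈ I2.colon (qIdeal k 3) := by
      rw [hcol]
      exact Submodule.mem_sup_right (Ideal.subset_span rfl)
    have hx : x ∈ I2 ⊔ Ideal.span {x2} := by
      rw [hxy]
      exact Submodule.mem_sup_right (Ideal.subset_span (by simp))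
    have hy : y ∈ I2 ⊔ Ideal.span {x2} := by
      rw [hxy]
      exact Submodule.mem_sup_right (Ideal.subset_span (by simp))
    obtain ⟨j, hj, w, hw, hxeq⟩ := Submodule.mem_sup.mp hx
    obtain ⟨c, hc⟩ := Ideal.mem_span_singleton'.mp hw
    obtain ⟨j', hj', w', hw', hyeq⟩ := Submodule.mem_sup.mp hy
    obtain ⟨c', hc'⟩ := Ideal.mem_span_singleton'.mp hw'
    have key : c' * x + (-c) * y ∈ I2 := by
      have : c' * x + (-c) * y = c' * j + (- c) * j' := by
        rw [← hxeq, ← hyeq, ← hc, ← hc']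
        ring
      rw [this]
      exact Ideal.add_mem _ (Ideal.mul_mem_left _ _ hj) (Ideal.mul_mem_left _ _ hj')
    obtain ⟨hc'q, hcq⟩ := hind c' (-c) key
    have hcq' : c ∈ qIdeal k 3 := by rwa [neg_mem_iff] at hcq
    have hcx2 : w ∈ I2 := by
      rw [← hc, mul_comm]
      exact Submodule.mem_colon.mp hx2colon c hcq'
    have hxI2 : x ∈ I2 := by
      rw [← hxeq]
      exact Ideal.add_mem _ hj hcx2
    have hone := (hind 1 0 (by rw [one_mul, zero_mul, add_zero]; exact hxI2)).1
    exact one_not_mem_q hone
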